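/- arXiv:2411.17699 — 4 statements merged into one kernel-verified Lean document; each statement's English description precedes it below -/
import Mathlib

section
/- Let $n \geq 2$, let $r_1, \dots, r_n$ be positive integers with $r = \sum_i r_i$, and let $\kappa$ be a positive integer. Suppose integers $\epsilon_1,\dots,\epsilon_n$ and residues $\mu, \mu_1,\dots,\mu_n$ satisfy $\kappa \sum_i r_i \epsilon_i = \mu - \sum_i \mu_i$. Define $q_i = \mu_i + \tfrac{1}{2}\kappa r_i + \kappa r_i \epsilon_i$ (assume $\kappa r_i$ is even so that $q_i \in \mathbb{Z}$) and $\gamma_{ij} = r_j q_i - r_i q_j$. Then $\sum_{i<j} \gamma_{ij} \equiv (r-1)\mu - \sum_i (r_i - 1)\mu_i \pmod 2$. -/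
/-- Split a double sum over all pairs into lower, upper, and diagonal parts. -/
lemma double_sum_split {n : ℕ} (f : Fin n → Fin n → ℤ) :
    ∑ i : Fin n, ∑ j : Fin n, f i j
      = (∑ i : Fin n, ∑ j : Fin n, if i < j then f i j else 0)
        + (∑ i : Fin n, ∑ j : Fin n, if j < i then f i j else 0)
        + ∑ i : Fin n, f i i := by
  have e : ∑ i : Fin n, ∑ j : Fin n, f i j
      = ∑ i : Fin n, ∑ j : Fin n,
          ((if i < j then f i j else 0) + ((if j < i then f i j else 0)
            + (if i = j then f i j else 0))) := by
    refine Finset.sum_congr rfl fun i _ => Finset.sum_congr rfl fun j _ => ?_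
    rcases lt_trichotomy i j with hij | hij | hij
    · simp [hij, asymm hij, hij.ne]
    · simp [hij]
    · simp [hij, asymm hij, hij.ne', not_lt_of_gt hij]
  rw [e]
  simp only [Finset.sum_add_distrib, Finset.sum_ite_eq, Finset.mem_univ, if_true]
  ring

lemma double_sum_swap {n : ℕ} (f : Fin n → Fin n → ℤ) :
    (∑ i : Fin n, ∑ j : Fin n, if j < i then f i j else 0)
      = ∑ i : Fin n, ∑ j : Fin n, if i < j then f j i else 0 := by
  rw [Finset.sum_comm]

/-- Parity computation for the Dirac pairings `γᵢⱼ = rⱼ qᵢ - rᵢ qⱼ` with the spectral flow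
decomposition `qᵢ = μᵢ + κ rᵢ / 2 + κ rᵢ εᵢ` (the half-integer part `κ rᵢ / 2` is encoded by
`h i` with `κ * r i = 2 * h i`), subject to the constraint `κ ∑ rᵢ εᵢ = μ - ∑ μᵢ`:
`∑_{i<j} γᵢⱼ ≡ (r-1) μ - ∑ᵢ (rᵢ - 1) μᵢ (mod 2)` where `r = ∑ᵢ rᵢ`. -/
theorem dirac_pairing_parity (n : ℕ) (hn : 2 ≤ n) (κ : ℤ) (hκ : 0 < κ)
    (r : Fin n → ℤ) (hr : ∀ i, 0 < r i)
    (h : Fin n → ℤ) (hh : ∀ i, κ * r i = 2 * h i)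
    (ε μi : Fin n → ℤ) (μ : ℤ)
    (hcon : κ * ∑ i, r i * ε i = μ - ∑ i, μi i)
    (q : Fin n → ℤ) (hq : ∀ i, q i = μi i + h i + κ * r i * ε i) :
    (∑ i : Fin n, ∑ j : Fin n, if i < j then r j * q i - r i * q j else 0) ≡
      ((∑ i, r i) - 1) * μ - ∑ i, (r i - 1) * μi i [ZMOD 2] := by
  -- abbreviations
  set R : ℤ := ∑ i, r i with hRdef
  -- symmetry r i * h j = r j * h i
  have key : ∀ i j : Fin n, r i * h j = r j * h i := by
    intro i j
    have h1 : κ * (r i * h j) = κ * (r j * h i) := by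
      linear_combination h j * hh i - h i * hh j
    exact mul_left_cancel₀ (ne_of_gt hκ) h1
  -- total sum of q
  have hQ : ∑ i, q i = μ + ∑ i, h i := by
    have e : ∑ i, q i = (∑ i, μi i) + (∑ i, h i) + κ * ∑ i, r i * ε i := by
      rw [Finset.mul_sum, ← Finset.sum_add_distrib, ← Finset.sum_add_distrib]
      exact Finset.sum_congr rfl fun i _ => by rw [hq i]; ring
    rw [e, hcon]; ring
  -- diagonal sum
  have hD : ∑ i, r i * q i
      = (∑ i, r i * μi i) + (∑ i, r i * h i) + 2 * ∑ i, h i * (r i * ε i) := by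
    rw [Finset.mul_sum, ← Finset.sum_add_distrib, ← Finset.sum_add_distrib]
    refine Finset.sum_congr rfl fun i _ => ?_
    linear_combination r i * hq i + (r i * ε i) * hh i
  -- constraint gives evenness of μ - ∑ μi
  have hμ : μ - ∑ i, μi i = 2 * ∑ i, h i * ε i := by
    rw [← hcon, Finset.mul_sum, Finset.mul_sum]
    exact Finset.sum_congr rfl fun i _ => by linear_combination ε i * hh i
  -- R * ∑ h - ∑ r h is even
  have hTotrh : ∑ i : Fin n, ∑ j : Fin n, r i * h j = R * ∑ i, h i := by
    rw [hRdef, Finset.sum_mul]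
    exact Finset.sum_congr rfl fun i _ => (Finset.mul_sum _ _ _).symm
  have hW : R * (∑ i, h i) - ∑ i, r i * h i
      = 2 * ∑ i : Fin n, ∑ j : Fin n, (if i < j then r i * h j else 0) := by
    have s1 := double_sum_split (fun i j => r i * h j)
    have s2 := double_sum_swap (fun i j => r i * h j)
    have s3 : (∑ i : Fin n, ∑ j : Fin n, if i < j then r j * h i else 0)
        = ∑ i : Fin n, ∑ j : Fin n, if i < j then r i * h j else 0 := by
      refine Finset.sum_congr rfl fun i _ => Finset.sum_congr rfl fun j _ => ?_
      rw [key j i]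
    rw [hTotrh] at s1
    rw [s2, s3] at s1
    linarith
  -- decompose the main double sum
  have hTotrq : ∑ i : Fin n, ∑ j : Fin n, r j * q i = R * ∑ i, q i := by
    rw [hRdef, Finset.mul_sum]
    refine Finset.sum_congr rfl fun i _ => ?_
    rw [← Finset.sum_mul]
  have hSsplit := double_sum_split (fun i j => r j * q i)
  have hSswap := double_sum_swap (fun i j => r j * q i)
  rw [hTotrq, hSswap] at hSsplit
  -- hSsplit : R * ∑ q = ∑∑ ite (i<j) (r j * q i) + ∑∑ ite (i<j) (r i * q j) + ∑ r i * q i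
  have hS : (∑ i : Fin n, ∑ j : Fin n, if i < j then r j * q i - r i * q j else 0)
      = R * (∑ i, q i) - (∑ i, r i * q i)
        - 2 * ∑ i : Fin n, ∑ j : Fin n, (if i < j then r i * q j else 0) := by
    have e : (∑ i : Fin n, ∑ j : Fin n, if i < j then r j * q i - r i * q j else 0)
        = (∑ i : Fin n, ∑ j : Fin n, if i < j then r j * q i else 0)
          - ∑ i : Fin n, ∑ j : Fin n, (if i < j then r i * q j else 0) := by
      rw [← Finset.sum_sub_distrib]
      refine Finset.sum_congr rfl fun i _ => ?_
      rw [← Finset.sum_sub_distrib]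
      refine Finset.sum_congr rfl fun j _ => ?_
      by_cases hij : i < j <;> simp [hij]
    rw [e]
    linarith [hSsplit]
  -- conclude
  refine Int.ModEq.symm (Int.modEq_iff_dvd.mpr ?_)
  refine ⟨(∑ i, h i * ε i)
      + (∑ i : Fin n, ∑ j : Fin n, (if i < j then r i * h j else 0))
      - (∑ i : Fin n, ∑ j : Fin n, (if i < j then r i * q j else 0))
      - (∑ i, h i * (r i * ε i)), ?_⟩
  have hRm : ∑ i, (r i - 1) * μi i = (∑ i, r i * μi i) - ∑ i, μi i := by
    rw [← Finset.sum_sub_distrib]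
    exact Finset.sum_congr rfl fun i _ => by ring
  rw [hS, hQ, hD, hRm]
  linear_combination hμ + hW
end

section
/- Let $r_1, \dots, r_n$ be positive integers, $r = \sum_i r_i$, and $\kappa$ a positive integer. The lattice $\Lambda = \{\mathbf{k} \in \mathbb{Z}^n : \sum_{i=1}^n r_i k_i = 0\}$ equipped with the bilinear form $\mathbf{x} \cdot \mathbf{y} = \kappa \sum_i r_i x_i y_i$ has discriminant (determinant of the Gram matrix of any $\mathbb{Z}$-basis) equal to $\frac{\kappa^{n-1} r}{r_0^2} \prod_{i=1}^n r_i$, where $r_0 = \gcd(r_1, \dots, r_n)$. -/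
/-- The linear form `k ↦ ∑ᵢ rᵢ kᵢ` on `ℤⁿ`; its kernel is the lattice `Λ^(𝐫)`. -/
def chargeSum {n : ℕ} (r : Fin n → ℤ) : (Fin n → ℤ) →ₗ[ℤ] ℤ where
  toFun k := ∑ i, r i * k i
  map_add' a b := by
    simp only [Pi.add_apply, mul_add]
    exact Finset.sum_add_distrib
  map_smul' c a := by
    simp only [Pi.smul_apply, smul_eq_mul, RingHom.id_apply]
    rw [Finset.mul_sum]
    exact Finset.sum_congr rfl fun i _ => by ring

/-- The lattice `Λ = {k ∈ ℤⁿ : ∑ rᵢ kᵢ = 0}` with bilinear form `𝐱 ⬝ 𝐲 = κ ∑ rᵢ xᵢ yᵢ`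
has discriminant (determinant of the Gram matrix of any ℤ-basis) equal to
`κ^(n-1) r (∏ rᵢ) / r₀²` where `r = ∑ rᵢ` and `r₀ = gcd(r₁, …, rₙ)`. -/
theorem lattice_discriminant (n : ℕ) (hn : 1 ≤ n) (κ : ℤ) (hκ : 0 < κ)
    (r : Fin n → ℤ) (hr : ∀ i, 0 < r i)
    (b : Module.Basis (Fin (n - 1)) ℤ (LinearMap.ker (chargeSum r))) :
    (Finset.univ.gcd r) ^ 2 *
        Matrix.det (Matrix.of fun a a' : Fin (n - 1) =>
          κ * ∑ i, r i * ((b a : Fin n → ℤ) i) * ((b a' : Fin n → ℤ) i))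
      = κ ^ (n - 1) * (∑ i, r i) * ∏ i, r i := by
  classical
  let f := chargeSum r
  have hfapp : ∀ y, f y = ∑ i, r i * y i := fun y => rfl
  set G : Matrix (Fin (n-1)) (Fin (n-1)) ℤ := Matrix.of fun a a' : Fin (n - 1) =>
      κ * ∑ i, r i * ((b a : Fin n → ℤ) i) * ((b a' : Fin n → ℤ) i) with hG
  set R : ℤ := ∑ i, r i with hR
  set P : ℤ := ∏ i, r i with hP
  have hprin : (LinearMap.range f).IsPrincipal := inferInstance
  set g : ℤ := Submodule.IsPrincipal.generator (LinearMap.range f) with hgdef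
  obtain ⟨x, hx⟩ : g ∈ LinearMap.range f := Submodule.IsPrincipal.generator_mem _
  have hdvd : ∀ y : Fin n → ℤ, g ∣ f y := by
    intro y
    have hy : f y ∈ Submodule.span ℤ {g} := by
      rw [Submodule.IsPrincipal.span_singleton_generator]
      exact ⟨y, rfl⟩
    obtain ⟨t, ht⟩ := Submodule.mem_span_singleton.mp hy
    exact ⟨t, by rw [← ht, smul_eq_mul]; ring⟩
  -- the matrix whose columns are the basis of the kernel plus a preimage of g
  let e : Fin (n-1) ⊕ Fin 1 ≃ Fin n := finSumFinEquiv.trans (finCongr (Nat.succ_pred_eq_of_pos hn))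
  let A : Matrix (Fin n) (Fin n) ℤ :=
    Matrix.of fun i j => Sum.elim (fun a => (b a : Fin n → ℤ) i) (fun _ => x i) (e.symm j)
  let j₀ : Fin n := e (Sum.inr 0)
  let A₁ : Matrix (Fin n) (Fin n) ℤ := A.updateCol j₀ (fun _ => (1:ℤ))
  have hj₀ : e.symm j₀ = Sum.inr 0 := Equiv.symm_apply_apply _ _
  have hA₁ : ∀ i j, A₁ i j = Sum.elim (fun a => (b a : Fin n → ℤ) i) (fun _ => (1:ℤ)) (e.symm j) := by
    intro i j
    rcases hp : e.symm j with a | u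
    · have hne : j ≠ j₀ := by
        intro h; rw [h, hj₀] at hp; exact nomatch hp
      simp only [A₁, Matrix.updateCol_apply, if_neg hne, A, Matrix.of_apply, hp, Sum.elim_inl]
    · have heq : j = j₀ := by
        have hu : u = 0 := Subsingleton.elim _ _
        rw [hu] at hp
        have h2 := congrArg e hp
        rw [Equiv.apply_symm_apply] at h2
        exact h2
      simp only [A₁, Matrix.updateCol_apply, if_pos heq, hp, Sum.elim_inr]
  have hker : ∀ a : Fin (n-1), ∑ i, r i * (b a : Fin n → ℤ) i = 0 := by
    intro a
    have := (b a).2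
    rw [LinearMap.mem_ker] at this
    rw [← hfapp]
    exact this
  have hblock : A₁.transpose * (Matrix.diagonal fun i => κ * r i) * A₁
      = (Matrix.fromBlocks G 0 0 (Matrix.of fun _ _ : Fin 1 => κ * R)).submatrix e.symm e.symm := by
    have hentry : ∀ j j', (A₁.transpose * ((Matrix.diagonal fun i => κ * r i) * A₁)) j j'
        = κ * ∑ i, r i * A₁ i j * A₁ i j' := by
      intro j j'
      rw [Matrix.mul_apply, Finset.mul_sum]
      refine Finset.sum_congr rfl fun i _ => ?_
      rw [Matrix.transpose_apply, Matrix.diagonal_mul]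
      ring
    rw [Matrix.mul_assoc]
    ext j j'
    rw [hentry, Matrix.submatrix_apply]
    rcases hp : e.symm j with a | u <;> rcases hq : e.symm j' with a' | u' <;>
      simp only [hA₁, hp, hq, Sum.elim_inl, Sum.elim_inr, Matrix.fromBlocks_apply₁₁,
        Matrix.fromBlocks_apply₁₂, Matrix.fromBlocks_apply₂₁, Matrix.fromBlocks_apply₂₂,
        Matrix.zero_apply, Matrix.of_apply, mul_one, one_mul]
    · rw [hG]; rfl
    · rw [hker, mul_zero]
    · rw [hker, mul_zero]
    · rfl
  have hdetD : (Matrix.diagonal fun i => κ * r i).det = κ ^ n * P := by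
    rw [Matrix.det_diagonal, Finset.prod_mul_distrib, Finset.prod_const, Finset.card_univ,
      Fintype.card_fin]
  have hdet1 : A₁.det ^ 2 * (κ ^ n * P) = G.det * (κ * R) := by
    have h1 := congrArg Matrix.det hblock
    have hof : (Matrix.of fun _ _ : Fin 1 => κ * R).det = κ * R := by
      simp [Matrix.det_fin_one]
    rw [Matrix.det_mul, Matrix.det_mul, Matrix.det_transpose,
      Matrix.det_submatrix_equiv_self, Matrix.det_fromBlocks_zero₂₁, hdetD, hof] at h1
    rw [sq]
    linear_combination h1
  -- A has unit determinant
  have hsurj : ∀ y : Fin n → ℤ, ∃ v, A.mulVec v = y := by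
    intro y
    obtain ⟨t, ht⟩ := hdvd y
    have hmem : y - t • x ∈ LinearMap.ker f := by
      rw [LinearMap.mem_ker, map_sub, map_smul, hx, ht, smul_eq_mul]
      ring
    refine ⟨fun j => Sum.elim (fun a => b.repr ⟨y - t • x, hmem⟩ a) (fun _ => t) (e.symm j), ?_⟩
    have hsum' : ∀ k, y k - t * x k
        = ∑ a, (b.repr ⟨y - t • x, hmem⟩ a) * (b a : Fin n → ℤ) k := by
      intro k
      have h0 := congrArg (Subtype.val) (Module.Basis.sum_repr b ⟨y - t • x, hmem⟩)
      have h1 := congrFun h0 k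
      simp only [AddSubmonoidClass.coe_finset_sum, SetLike.val_smul, Finset.sum_apply,
        Pi.smul_apply, smul_eq_mul, Pi.sub_apply] at h1
      rw [← h1]
    funext k
    simp only [Matrix.mulVec, dotProduct]
    rw [← Equiv.sum_comp e (fun j => A k j * Sum.elim (fun a => b.repr ⟨y - t • x, hmem⟩ a)
      (fun _ => t) (e.symm j))]
    simp only [Equiv.symm_apply_apply, Fintype.sum_sum_type, Fin.sum_univ_one]
    simp only [A, Matrix.of_apply, Equiv.symm_apply_apply, Sum.elim_inl, Sum.elim_inr]
    have := hsum' k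
    have hfinal : ∑ a, (b a : Fin n → ℤ) k * b.repr ⟨y - t • x, hmem⟩ a
        = ∑ a, (b.repr ⟨y - t • x, hmem⟩ a) * (b a : Fin n → ℤ) k :=
      Finset.sum_congr rfl fun a _ => mul_comm _ _
    rw [hfinal, ← this]
    ring
  have hA2 : A.det ^ 2 = 1 := by
    choose C hC using hsurj
    have hAB : A * (Matrix.of fun j i => C (Pi.single i 1) j) = 1 := by
      ext k i
      rw [Matrix.mul_apply]
      have h1 := congrFun (hC (Pi.single i 1)) k
      simp only [Matrix.mulVec, dotProduct] at h1
      simp only [Matrix.of_apply]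
      rw [h1, Matrix.one_apply, Pi.single_apply]
    exact Int.isUnit_sq (Matrix.isUnit_det_of_right_inverse hAB)
  -- det A₁ = s * det A  where R = g * s
  obtain ⟨s, hs⟩ := hdvd (fun _ => 1)
  have hf1 : f (fun _ => 1) = R := by rw [hfapp]; simp [hR]
  have hdetA₁ : A₁.det = s * A.det := by
    have hmem : (fun _ => (1:ℤ)) - s • x ∈ LinearMap.ker f := by
      rw [LinearMap.mem_ker, map_sub, map_smul, hx, hs, smul_eq_mul]
      ring
    set c : Fin n → ℤ :=
      fun j => Sum.elim (fun a => b.repr ⟨_, hmem⟩ a) (fun _ => s) (e.symm j) with hc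
    have hsum' : ∀ k, (1:ℤ) - s * x k
        = ∑ a, (b.repr ⟨_, hmem⟩ a) * (b a : Fin n → ℤ) k := by
      intro k
      have h0 := congrArg (Subtype.val) (Module.Basis.sum_repr b ⟨_, hmem⟩)
      have h1 := congrFun h0 k
      simp only [AddSubmonoidClass.coe_finset_sum, SetLike.val_smul, Finset.sum_apply,
        Pi.smul_apply, smul_eq_mul, Pi.sub_apply] at h1
      rw [← h1]
    have hcol : (fun _ => (1:ℤ)) = fun k => ∑ j, c j • A k j := by
      funext k
      rw [← Equiv.sum_comp e (fun j => c j • A k j)]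
      simp only [hc, Equiv.symm_apply_apply, Fintype.sum_sum_type, Fin.sum_univ_one,
        smul_eq_mul]
      simp only [A, Matrix.of_apply, Equiv.symm_apply_apply, Sum.elim_inl, Sum.elim_inr]
      rw [← hsum' k]
      ring
    have : A₁ = A.updateCol j₀ (fun k => ∑ j, c j • A k j) := by
      rw [← hcol]
    rw [this, Matrix.det_updateCol_sum]
    simp only [hc, hj₀, Sum.elim_inr, smul_eq_mul]
  -- gcd
  have hgcd : (Finset.univ.gcd r) ^ 2 = g ^ 2 := by
    have h1 : g ∣ Finset.univ.gcd r := by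
      refine Finset.dvd_gcd fun i _ => ?_
      have hsingle : f (Pi.single i 1) = r i := by
        rw [hfapp]
        simp [Pi.single_apply, mul_ite]
      exact hsingle ▸ hdvd (Pi.single i 1)
    have h2 : Finset.univ.gcd r ∣ g := by
      rw [← hx, hfapp]
      exact Finset.dvd_sum fun i _ => Dvd.dvd.mul_right (Finset.gcd_dvd (Finset.mem_univ i)) _
    rcases Int.associated_iff.mp (associated_of_dvd_dvd h2 h1) with h | h
    · rw [h]
    · rw [h]; ring
  have hRpos : 0 < R := by
    rw [hR]
    exact Finset.sum_pos (fun i _ => hr i) ⟨⟨0, hn⟩, Finset.mem_univ _⟩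
  have hgs : g * s = R := by rw [← hs, hf1]
  have hκn : κ ^ n = κ ^ (n-1) * κ := by
    have h : n - 1 + 1 = n := by omega
    conv_lhs => rw [← h]
    rw [pow_succ]
  -- final algebra
  have key : (κ * R) * ((Finset.univ.gcd r) ^ 2 * G.det) = (κ * R) * (κ ^ (n-1) * R * P) := by
    have h2 : (s * A.det) ^ 2 * (κ ^ n * P) = G.det * (κ * R) := by rw [← hdetA₁]; exact hdet1
    rw [mul_pow, hA2, mul_one] at h2
    have h3 : g ^ 2 * (s ^ 2 * (κ ^ n * P)) = g ^ 2 * (G.det * (κ * R)) := by rw [h2]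
    calc (κ * R) * ((Finset.univ.gcd r) ^ 2 * G.det)
        = g ^ 2 * (G.det * (κ * R)) := by rw [hgcd]; ring
      _ = g ^ 2 * (s ^ 2 * (κ ^ n * P)) := h3.symm
      _ = (g * s) ^ 2 * (κ ^ n * P) := by ring
      _ = R ^ 2 * (κ ^ n * P) := by rw [hgs]
      _ = (κ * R) * (κ ^ (n-1) * R * P) := by rw [hκn]; ring
  have hne : (κ * R) ≠ 0 := by positivity
  exact mul_left_cancel₀ hne key
end

section
/- Let $n \geq 1$ and let $r_1, \dots, r_n$ be positive integers with $r = \sum_i r_i$ and $r_0 = \gcd(r_1, \dots, r_n)$. Define for an ordered composition $n = \sum_{k=1}^m n_k$ the groupings $s_k = \sum_{i=j_k+1}^{j_{k+1}} r_i$ where $j_k = \sum_{l<k} n_l$, and for a tuple $\mathbf{t} = (t_1, \dots, t_p)$ of positive integers set $c_{\mathbf{t}} = \frac{\gcd(\mathbf{t})}{(\pi i \kappa)^{p-1} (\sum_i t_i)} \prod_{k=1}^{p-1}\big(\sum_{i=1}^k t_i \sum_{j=p-k+1}^{p} t_j\big)^{-1}$ (with the empty product equal to $1$, so $c_{(t)}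 = \tfrac{\gcd(t)}{t} = 1$ for a single entry). Then, for $n = 2$ and $n = 3$ and any positive integer $\kappa$: $\sum_{m=1}^n \sum_{n_1 + \cdots + n_m = n} \big(-\tfrac{1}{\pi i \kappa}\big)^{m-1} \frac{\prod_{k=1}^m c_{\mathfrak{r}_k}}{\prod_{k=1}^m \gcd(\mathfrak{r}_k) \prod_{k=1}^{m-1}(s_k + s_{k+1})} = 0$, where $\mathfrak{r}_k = (r_{j_k+1}, \dots, r_{j_{k+1}})$. -/
open Complex

/-- gcd of a list of naturals. -/
def listGcd (t : List ℕ) : ℕ := t.foldr Nat.gcd 0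

/-- The coefficient `c_𝐭 = gcd(𝐭) / ((πiκ)^{p-1} (∑ tᵢ) ∏_{k=1}^{p-1} (∑_{i≤k} tᵢ · ∑_{j≥p-k+1} tⱼ))`
for a tuple `𝐭 = (t₁,…,t_p)` of positive integers (empty product `= 1`). -/
noncomputable def ccoef (κ : ℕ) (t : List ℕ) : ℂ :=
  (listGcd t : ℂ) /
    (((Real.pi : ℂ) * I * κ) ^ (t.length - 1) * (t.sum : ℂ) *
      ∏ k ∈ Finset.range (t.length - 1),
        (((t.take (k + 1)).sum : ℂ) * ((t.drop (t.length - (k + 1))).sum : ℂ)))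

lemma ccoef_single (κ a : ℕ) (ha : 0 < a) : ccoef κ [a] = 1 := by
  have : (a : ℂ) ≠ 0 := Nat.cast_ne_zero.mpr ha.ne'
  simp [ccoef, listGcd, this]

lemma ccoef_pair (κ a b : ℕ) :
    ccoef κ [a, b] =
      (Nat.gcd a b : ℂ) / (((Real.pi : ℂ) * I * κ) * (((a : ℂ) + b) * ((a : ℂ) * b))) := by
  simp only [ccoef, listGcd, List.foldr, List.length, List.sum_cons, List.sum_nil,
    Nat.cast_add, Nat.gcd_zero_right, Finset.prod_range_succ, Finset.prod_range_zero,
    List.take, List.drop, add_zero, pow_one, one_mul, mul_one]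
  ring

lemma ccoef_triple (κ a b c : ℕ) :
    ccoef κ [a, b, c] =
      (Nat.gcd a (Nat.gcd b c) : ℂ) /
        (((Real.pi : ℂ) * I * κ) ^ 2 *
          (((a : ℂ) + b + c) * (((a : ℂ) * c) * (((a : ℂ) + b) * ((b : ℂ) + c))))) := by
  simp only [ccoef, listGcd, List.foldr, List.length, List.sum_cons, List.sum_nil,
    Nat.cast_add, Nat.gcd_zero_right, Finset.prod_range_succ, Finset.prod_range_zero,
    List.take, List.drop, add_zero, one_mul, mul_one]
  ring

lemma ccoef_aux2 (A a b g : ℂ) (hA : A ≠ 0) (ha : a ≠ 0) (hb : b ≠ 0)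
    (hab : a + b ≠ 0) (hg : g ≠ 0) :
    (g / (A * ((a + b) * (a * b)))) / g + (-(1 / A)) * (1 * 1 / (a * b * (a + b))) = 0 := by
  set P := A * (a * b * (a + b)) with hPdef
  have hP : P ≠ 0 := by
    rw [hPdef]
    simp only [mul_ne_zero_iff]
    exact ⟨hA, ⟨ha, hb⟩, hab⟩
  have e1 : (g / (A * ((a + b) * (a * b)))) / g = 1 / P := by
    rw [div_div, hPdef, div_eq_div_iff (by
      simp only [mul_ne_zero_iff]
      exact ⟨⟨hA, hab, ha, hb⟩, hg⟩) hP]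
    ring
  have e2 : (-(1 / A)) * (1 * 1 / (a * b * (a + b))) = -1 / P := by
    rw [one_mul, ← neg_div, div_mul_div_comm, hPdef, div_eq_div_iff (by
      simp only [mul_ne_zero_iff]
      exact ⟨hA, ⟨ha, hb⟩, hab⟩) hP]
    ring
  rw [e1, e2, ← add_div, div_eq_zero_iff]
  left; ring

lemma ccoef_aux3 (A a b c g12 g23 g : ℂ) (hA : A ≠ 0) (ha : a ≠ 0) (hb : b ≠ 0) (hc : c ≠ 0)
    (hab : a + b ≠ 0) (hbc : b + c ≠ 0) (habc : a + b + c ≠ 0)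
    (hg12 : g12 ≠ 0) (hg23 : g23 ≠ 0) (hg : g ≠ 0) :
    (g / (A ^ 2 * ((a + b + c) * ((a * c) * ((a + b) * (b + c)))))) / g
      + (-(1 / A)) * ((g12 / (A * ((a + b) * (a * b)))) * 1 / (g12 * c * (a + b + c)))
      + (-(1 / A)) * (1 * (g23 / (A * ((b + c) * (b * c)))) / (a * g23 * (a + (b + c))))
      + (-(1 / A)) ^ 2 * (1 * 1 * 1 / (a * b * c * ((a + b) * (b + c)))) = 0 := by
  set P := A ^ 2 * (a * b * c * ((a + b) * ((b + c) * (a + b + c)))) with hPdef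
  have hP : P ≠ 0 := by
    rw [hPdef]
    simp only [mul_ne_zero_iff]
    exact ⟨pow_ne_zero 2 hA, ⟨⟨ha, hb⟩, hc⟩, hab, hbc, habc⟩
  have e1 : (g / (A ^ 2 * ((a + b + c) * ((a * c) * ((a + b) * (b + c)))))) / g = b / P := by
    rw [div_div, hPdef, div_eq_div_iff (by
      simp only [mul_ne_zero_iff]
      exact ⟨⟨pow_ne_zero 2 hA, habc, ⟨ha, hc⟩, hab, hbc⟩, hg⟩) hP]
    ring
  have e2 : (-(1 / A)) * ((g12 / (A * ((a + b) * (a * b)))) * 1 / (g12 * c * (a + b + c)))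
      = -(b + c) / P := by
    rw [mul_one, div_div, ← neg_div, div_mul_div_comm, hPdef, div_eq_div_iff (by
      simp only [mul_ne_zero_iff]
      exact ⟨hA, ⟨hA, hab, ha, hb⟩, ⟨hg12, hc⟩, habc⟩) hP]
    ring
  have e3 : (-(1 / A)) * (1 * (g23 / (A * ((b + c) * (b * c)))) / (a * g23 * (a + (b + c))))
      = -(a + b) / P := by
    rw [one_mul, div_div, ← neg_div, div_mul_div_comm, hPdef, div_eq_div_iff (by
      simp only [mul_ne_zero_iff]
      refine ⟨hA, ⟨hA, hbc, hb, hc⟩, ⟨ha, hg23⟩, ?_⟩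
      rwa [← add_assoc]) hP]
    ring
  have e4 : (-(1 / A)) ^ 2 * (1 * 1 * 1 / (a * b * c * ((a + b) * (b + c))))
      = (a + b + c) / P := by
    rw [neg_pow, div_pow, one_pow, mul_one, mul_one, neg_one_sq, one_mul,
      div_mul_div_comm, one_mul, hPdef, div_eq_div_iff (by
        simp only [mul_ne_zero_iff]
        exact ⟨pow_ne_zero 2 hA, ⟨⟨ha, hb⟩, hc⟩, hab, hbc⟩) hP]
    ring
  rw [e1, e2, e3, e4, ← add_div, ← add_div, ← add_div, div_eq_zero_iff]
  left; ring

/-- The leading coefficients `c_𝐫` solve the system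
`∑_{m=1}^n ∑_{n₁+⋯+n_m=n} (-1/(πiκ))^{m-1} ∏ c_{𝔯_k} / (∏ gcd(𝔯_k) ∏ (s_k + s_{k+1})) = 0`
for `n = 2` and `n = 3` (the sums over ordered compositions written out explicitly). -/
theorem ccoef_system (κ r₁ r₂ r₃ : ℕ) (hκ : 0 < κ)
    (h₁ : 0 < r₁) (h₂ : 0 < r₂) (h₃ : 0 < r₃) :
    (ccoef κ [r₁, r₂] / (Nat.gcd r₁ r₂ : ℂ)
        + (-(1 / ((Real.pi : ℂ) * I * κ))) *
            (ccoef κ [r₁] * ccoef κ [r₂] / ((r₁ : ℂ) * (r₂ : ℂ) * ((r₁ : ℂ) + (r₂ : ℂ)))) = 0) ∧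
    (ccoef κ [r₁, r₂, r₃] / (listGcd [r₁, r₂, r₃] : ℂ)
        + (-(1 / ((Real.pi : ℂ) * I * κ))) *
            (ccoef κ [r₁, r₂] * ccoef κ [r₃] /
              ((Nat.gcd r₁ r₂ : ℂ) * (r₃ : ℂ) * (((r₁ : ℂ) + (r₂ : ℂ)) + (r₃ : ℂ))))
        + (-(1 / ((Real.pi : ℂ) * I * κ))) *
            (ccoef κ [r₁] * ccoef κ [r₂, r₃] /
              ((r₁ : ℂ) * (Nat.gcd r₂ r₃ : ℂ) * ((r₁ : ℂ) + ((r₂ : ℂ) + (r₃ : ℂ)))))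
        + (-(1 / ((Real.pi : ℂ) * I * κ))) ^ 2 *
            (ccoef κ [r₁] * ccoef κ [r₂] * ccoef κ [r₃] /
              ((r₁ : ℂ) * (r₂ : ℂ) * (r₃ : ℂ) *
                (((r₁ : ℂ) + (r₂ : ℂ)) * ((r₂ : ℂ) + (r₃ : ℂ))))) = 0) := by
  have hπ : ((Real.pi : ℂ)) ≠ 0 := by exact_mod_cast Real.pi_ne_zero
  have hκ' : (κ : ℂ) ≠ 0 := Nat.cast_ne_zero.mpr hκ.ne'
  have hA : (Real.pi : ℂ) * I * κ ≠ 0 := mul_ne_zero (mul_ne_zero hπ I_ne_zero) hκ'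
  have h1 : (r₁ : ℂ) ≠ 0 := Nat.cast_ne_zero.mpr h₁.ne'
  have h2 : (r₂ : ℂ) ≠ 0 := Nat.cast_ne_zero.mpr h₂.ne'
  have h3 : (r₃ : ℂ) ≠ 0 := Nat.cast_ne_zero.mpr h₃.ne'
  have h12 : (r₁ : ℂ) + r₂ ≠ 0 := by
    have : (0:ℕ) < r₁ + r₂ := by omega
    exact_mod_cast Nat.cast_ne_zero.mpr this.ne'
  have h23 : (r₂ : ℂ) + r₃ ≠ 0 := by
    have : (0:ℕ) < r₂ + r₃ := by omega
    exact_mod_cast Nat.cast_ne_zero.mpr this.ne'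
  have h123 : (r₁ : ℂ) + r₂ + r₃ ≠ 0 := by
    have : (0:ℕ) < r₁ + r₂ + r₃ := by omega
    exact_mod_cast Nat.cast_ne_zero.mpr this.ne'
  have hg12 : (Nat.gcd r₁ r₂ : ℂ) ≠ 0 :=
    Nat.cast_ne_zero.mpr (Nat.gcd_ne_zero_left h₁.ne')
  have hg23 : (Nat.gcd r₂ r₃ : ℂ) ≠ 0 :=
    Nat.cast_ne_zero.mpr (Nat.gcd_ne_zero_left h₂.ne')
  have hg123 : (Nat.gcd r₁ (Nat.gcd r₂ r₃) : ℂ) ≠ 0 :=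
    Nat.cast_ne_zero.mpr (Nat.gcd_ne_zero_left h₁.ne')
  have hgl : (listGcd [r₁, r₂, r₃] : ℂ) = (Nat.gcd r₁ (Nat.gcd r₂ r₃) : ℂ) := by
    simp [listGcd]
  rw [ccoef_single κ r₁ h₁, ccoef_single κ r₂ h₂, ccoef_single κ r₃ h₃,
    ccoef_pair κ r₁ r₂, ccoef_pair κ r₂ r₃, ccoef_triple κ r₁ r₂ r₃, hgl]
  exact ⟨ccoef_aux2 _ _ _ _ hA h1 h2 h12 hg12,
    ccoef_aux3 _ _ _ _ _ _ _ hA h1 h2 h3 h12 h23 h123 hg12 hg23 hg123⟩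
end

section
/- Fix positive integers $r_1, \dots, r_n$ and write $r_{i::j} = \gcd(r_i, r_{i+1}, \dots, r_j)$; set $N_{ij} = \frac{r_{(i+1)::(j-1)} \cdot r_{i::j}}{r_{i::(j-1)} \cdot r_{(i+1)::j}}$ for $j - i > 1$. Then each $N_{ij}$ is a positive integer, and $\prod_{i=1}^{n-2}\prod_{j=i+2}^{n} N_{ij} = \frac{r_0 \prod_{j=2}^{n-1} r_j}{\prod_{i=1}^{n-1} r_{i,i+1}}$, where $r_0 = \gcd(r_1, \dots, r_n)$ and $r_{i,i+1} = \gcd(r_i, r_{i+1})$. -/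
/-- `g r i j = gcd(rᵢ, r_{i+1}, …, rⱼ)`. -/
def rangeGcd (r : ℕ → ℕ) (i j : ℕ) : ℕ := (Finset.Icc i j).gcd r

lemma Icc_insert_top {a b : ℕ} (h : a ≤ b + 1) : Finset.Icc a (b+1) = insert (b+1) (Finset.Icc a b) := by
  rw [← Finset.Ico_insert_right h]
  congr 1

lemma rangeGcd_self (r : ℕ → ℕ) (i : ℕ) : rangeGcd r i i = r i := by
  simp [rangeGcd]

lemma rangeGcd_left (r : ℕ → ℕ) {i j : ℕ} (h : i ≤ j) :
    rangeGcd r i j = Nat.gcd (r i) (rangeGcd r (i+1) j) := by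
  rw [rangeGcd, rangeGcd, ← Finset.Ioc_insert_left h, Finset.Icc_add_one_left_eq_Ioc, Finset.gcd_insert]
  rfl

lemma rangeGcd_right (r : ℕ → ℕ) {i j : ℕ} (h : i ≤ j + 1) :
    rangeGcd r i (j+1) = Nat.gcd (rangeGcd r i j) (r (j+1)) := by
  rw [rangeGcd, rangeGcd, Icc_insert_top h, Finset.gcd_insert, Nat.gcd_comm]
  rfl

lemma rangeGcd_pair (r : ℕ → ℕ) (i : ℕ) : rangeGcd r i (i+1) = Nat.gcd (r i) (r (i+1)) := by
  rw [rangeGcd_left r (by omega), rangeGcd_self]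

lemma rangeGcd_pos {r : ℕ → ℕ} {i j : ℕ} (h : i ≤ j) (hi : 0 < r i) : 0 < rangeGcd r i j := by
  rcases Nat.eq_zero_or_pos (rangeGcd r i j) with h0 | h0
  · exfalso
    have := Finset.gcd_dvd (f := r) (Finset.mem_Icc.2 ⟨le_refl i, h⟩)
    rw [rangeGcd] at h0
    rw [h0] at this
    omega
  · exact h0

lemma rangeGcd_congr {r r' : ℕ → ℕ} {i j n : ℕ} (hi : 1 ≤ i) (h : j ≤ n)
    (hrr : ∀ k, 1 ≤ k → k ≤ n → r k = r' k) : rangeGcd r i j = rangeGcd r' i j := by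
  apply Finset.gcd_congr rfl
  intro a ha
  rw [Finset.mem_Icc] at ha
  exact hrr a (by omega) (by omega)

lemma key_dvd (a d b : ℕ) : Nat.gcd a d * Nat.gcd d b ∣ d * Nat.gcd a (Nat.gcd d b) := by
  conv_rhs => rw [← Nat.gcd_mul_left d a (Nat.gcd d b), ← Nat.gcd_mul_left d d b]
  refine Nat.dvd_gcd ?_ (Nat.dvd_gcd ?_ ?_)
  · rw [mul_comm d a]; exact mul_dvd_mul (Nat.gcd_dvd_left a d) (Nat.gcd_dvd_left d b)
  · exact mul_dvd_mul (Nat.gcd_dvd_right a d) (Nat.gcd_dvd_left d b)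
  · exact mul_dvd_mul (Nat.gcd_dvd_right a d) (Nat.gcd_dvd_right d b)

/-- Telescoping product in ℚ. -/
lemma teles (f : ℕ → ℚ) : ∀ m : ℕ, (∀ k, 1 ≤ k → k ≤ m + 1 → f k ≠ 0) →
    ∏ i ∈ Finset.Icc 1 m, f i / f (i + 1) = f 1 / f (m + 1) := by
  intro m
  induction m with
  | zero => intro h; simp; exact (div_self (h 1 le_rfl le_rfl)).symm
  | succ m ih =>
    intro h
    rw [Finset.prod_Icc_succ_top (by omega), ih (fun k h1 h2 => h k h1 (by omega)),
      div_mul_div_comm, mul_comm (f 1), mul_div_mul_left _ _ (h (m+1) (by omega) (by omega))]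

/-- Inner telescoping product over `j`. -/
lemma innerProd (r : ℕ → ℕ) (hr : ∀ k, 0 < r k) (i : ℕ) : ∀ n : ℕ, i + 2 ≤ n →
    ∏ j ∈ Finset.Icc (i + 2) n,
        ((rangeGcd r (i + 1) (j - 1) : ℚ) * (rangeGcd r i j : ℚ)) /
          ((rangeGcd r i (j - 1) : ℚ) * (rangeGcd r (i + 1) j : ℚ))
      = ((rangeGcd r i n : ℚ) * (r (i+1) : ℚ)) /
          ((rangeGcd r i (i+1) : ℚ) * (rangeGcd r (i + 1) n : ℚ)) := by
  intro n
  induction n with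
  | zero => omega
  | succ n ih =>
    intro hn
    rcases Nat.lt_or_ge (i + 2) (n + 1) with h | h
    · have hn' : i + 2 ≤ n := by omega
      rw [Finset.prod_Icc_succ_top (by omega), ih hn']
      have e1 : n + 1 - 1 = n := rfl
      rw [e1]
      have p1 : ((rangeGcd r i n : ℚ)) ≠ 0 := by
        have : 0 < rangeGcd r i n := rangeGcd_pos (by omega) (hr i)
        exact_mod_cast this.ne'
      have p2 : ((rangeGcd r (i+1) n : ℚ)) ≠ 0 := by
        have : 0 < rangeGcd r (i+1) n := rangeGcd_pos (by omega) (hr (i+1))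
        exact_mod_cast this.ne'
      have p3 : ((rangeGcd r i (i+1) : ℚ)) ≠ 0 := by
        have : 0 < rangeGcd r i (i+1) := rangeGcd_pos (by omega) (hr i)
        exact_mod_cast this.ne'
      have p4 : ((rangeGcd r (i+1) (n+1) : ℚ)) ≠ 0 := by
        have : 0 < rangeGcd r (i+1) (n+1) := rangeGcd_pos (by omega) (hr (i+1))
        exact_mod_cast this.ne'
      field_simp
    · have hn2 : n + 1 = i + 2 := by omega
      rw [hn2, Finset.Icc_self, Finset.prod_singleton]
      have e1 : i + 2 - 1 = i + 1 := rfl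
      rw [e1, rangeGcd_self]
      ring

/-- The full product identity, for everywhere-positive `r`. -/
lemma part2 (n : ℕ) (hn : 2 ≤ n) (r : ℕ → ℕ) (hr : ∀ k, 0 < r k) :
    ∏ i ∈ Finset.Icc 1 (n - 2), ∏ j ∈ Finset.Icc (i + 2) n,
        ((rangeGcd r (i + 1) (j - 1) : ℚ) * (rangeGcd r i j : ℚ)) /
          ((rangeGcd r i (j - 1) : ℚ) * (rangeGcd r (i + 1) j : ℚ))
      = ((rangeGcd r 1 n : ℚ) * ∏ j ∈ Finset.Icc 2 (n - 1), (r j : ℚ)) /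
          ∏ i ∈ Finset.Icc 1 (n - 1), (Nat.gcd (r i) (r (i + 1)) : ℚ) := by
  obtain ⟨m, rfl⟩ : ∃ m, n = m + 2 := ⟨n - 2, by omega⟩
  simp only [show m + 2 - 2 = m from rfl, show m + 2 - 1 = m + 1 from rfl]
  have hpos : ∀ i j : ℕ, i ≤ j → (0:ℚ) < (rangeGcd r i j : ℚ) := by
    intro i j h
    exact_mod_cast rangeGcd_pos h (hr i)
  have step1 : ∏ i ∈ Finset.Icc 1 (m), ∏ j ∈ Finset.Icc (i + 2) (m+2),
        ((rangeGcd r (i + 1) (j - 1) : ℚ) * (rangeGcd r i j : ℚ)) /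
          ((rangeGcd r i (j - 1) : ℚ) * (rangeGcd r (i + 1) j : ℚ))
      = ∏ i ∈ Finset.Icc 1 (m),
          (((rangeGcd r i (m+2) : ℚ) / (rangeGcd r (i+1) (m+2) : ℚ)) * ((r (i+1) : ℚ) / (rangeGcd r i (i+1) : ℚ))) := by
    apply Finset.prod_congr rfl
    intro i hi
    rw [Finset.mem_Icc] at hi
    rw [innerProd r hr i (m+2) (by omega)]
    ring
  rw [step1, Finset.prod_mul_distrib]
  have t1 : ∏ i ∈ Finset.Icc 1 (m), ((rangeGcd r i (m+2) : ℚ) / (rangeGcd r (i+1) (m+2) : ℚ))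
      = (rangeGcd r 1 (m+2) : ℚ) / (rangeGcd r (m+1) (m+2) : ℚ) := by
    have := teles (fun i => (rangeGcd r i (m+2) : ℚ)) (m)
      (fun k h1 h2 => ne_of_gt (hpos k (m+2) (by omega)))
    rw [this]
  have t2 : ∏ i ∈ Finset.Icc 1 (m), ((r (i+1) : ℚ) / (rangeGcd r i (i+1) : ℚ))
      = (∏ j ∈ Finset.Icc 2 (m + 1), (r j : ℚ)) / ∏ i ∈ Finset.Icc 1 (m), (rangeGcd r i (i+1) : ℚ) := by
    rw [Finset.prod_div_distrib]
    congr 1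
    rw [show (2:ℕ) = 1 + 1 from rfl,
      ← Finset.map_add_right_Icc, Finset.prod_map]
    rfl
  have t3 : ∏ i ∈ Finset.Icc 1 (m + 1), (Nat.gcd (r i) (r (i + 1)) : ℚ)
      = (∏ i ∈ Finset.Icc 1 (m), (rangeGcd r i (i+1) : ℚ)) * (rangeGcd r (m+1) (m+2) : ℚ) := by
    rw [Finset.prod_Icc_succ_top (by omega)]
    congr 1
    · apply Finset.prod_congr rfl
      intro i _
      rw [rangeGcd_pair]
    · rw [rangeGcd_pair]
  rw [t1, t2, t3]
  ring

/-- Writing `g i j = gcd(rᵢ, …, rⱼ)` and `N_{ij} = (g (i+1) (j-1) · g i j)/(g i (j-1) · g (i+1) j)`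
for `j - i > 1`: each `N_{ij}` is a positive integer, and
`∏_{i=1}^{n-2} ∏_{j=i+2}^{n} N_{ij} = r₀ (∏_{j=2}^{n-1} rⱼ) / (∏_{i=1}^{n-1} gcd(rᵢ, r_{i+1}))`
where `r₀ = gcd(r₁, …, rₙ)`. -/
theorem glue_vector_count (n : ℕ) (hn : 2 ≤ n) (r : ℕ → ℕ)
    (hr : ∀ i, 1 ≤ i → i ≤ n → 0 < r i) :
    (∀ i j : ℕ, 1 ≤ i → i + 1 < j → j ≤ n →
      ∃ m : ℕ, 0 < m ∧
        ((rangeGcd r (i + 1) (j - 1) : ℚ) * (rangeGcd r i j : ℚ)) /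
            ((rangeGcd r i (j - 1) : ℚ) * (rangeGcd r (i + 1) j : ℚ)) = (m : ℚ)) ∧
    ∏ i ∈ Finset.Icc 1 (n - 2), ∏ j ∈ Finset.Icc (i + 2) n,
        ((rangeGcd r (i + 1) (j - 1) : ℚ) * (rangeGcd r i j : ℚ)) /
          ((rangeGcd r i (j - 1) : ℚ) * (rangeGcd r (i + 1) j : ℚ))
      = ((rangeGcd r 1 n : ℚ) * ∏ j ∈ Finset.Icc 2 (n - 1), (r j : ℚ)) /
          ∏ i ∈ Finset.Icc 1 (n - 1), (Nat.gcd (r i) (r (i + 1)) : ℚ) := by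
  constructor
  · -- each N_{ij} is a positive integer
    intro i j h1 h2 h3
    set a := r i with ha_def
    set b := r j with hb_def
    set d := rangeGcd r (i+1) (j-1) with hd_def
    have ha : 0 < a := hr i h1 (by omega)
    have hb : 0 < b := hr j (by omega) h3
    have hd : 0 < d := rangeGcd_pos (by omega) (hr (i+1) (by omega) (by omega))
    have e1 : rangeGcd r i (j-1) = Nat.gcd a d := rangeGcd_left r (by omega)
    have e2 : rangeGcd r (i+1) j = Nat.gcd d b := by
      have := rangeGcd_right r (i := i+1) (j := j-1) (by omega)
      rw [show j - 1 + 1 = j by omega] at this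
      exact this
    have e3 : rangeGcd r i j = Nat.gcd a (Nat.gcd d b) := by
      rw [rangeGcd_left r (show i ≤ j by omega), e2]
    have hnum : 0 < d * Nat.gcd a (Nat.gcd d b) :=
      Nat.mul_pos hd (Nat.gcd_pos_of_pos_left _ ha)
    have hden : 0 < Nat.gcd a d * Nat.gcd d b :=
      Nat.mul_pos (Nat.gcd_pos_of_pos_left _ ha) (Nat.gcd_pos_of_pos_left _ hd)
    refine ⟨(d * Nat.gcd a (Nat.gcd d b)) / (Nat.gcd a d * Nat.gcd d b), ?_, ?_⟩
    · exact Nat.div_pos (Nat.le_of_dvd hnum (key_dvd a d b)) hden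
    · rw [e1, e2, e3]
      rw [Nat.cast_div (key_dvd a d b) (by exact_mod_cast hden.ne')]
      push_cast
      ring
  · -- the product identity: transfer to an everywhere-positive modification of r
    set r' : ℕ → ℕ := fun k => if 1 ≤ k ∧ k ≤ n then r k else 1 with hr'_def
    have hagree : ∀ k, 1 ≤ k → k ≤ n → r k = r' k := by
      intro k h1 h2
      simp [hr'_def, h1, h2]
    have hr' : ∀ k, 0 < r' k := by
      intro k
      by_cases h : 1 ≤ k ∧ k ≤ n
      · simpa [hr'_def, h] using hr k h.1 h.2
      · simp [hr'_def, h]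
    have key := part2 n hn r' hr'
    have L : ∏ i ∈ Finset.Icc 1 (n - 2), ∏ j ∈ Finset.Icc (i + 2) n,
        ((rangeGcd r (i + 1) (j - 1) : ℚ) * (rangeGcd r i j : ℚ)) /
          ((rangeGcd r i (j - 1) : ℚ) * (rangeGcd r (i + 1) j : ℚ))
        = ∏ i ∈ Finset.Icc 1 (n - 2), ∏ j ∈ Finset.Icc (i + 2) n,
        ((rangeGcd r' (i + 1) (j - 1) : ℚ) * (rangeGcd r' i j : ℚ)) /
          ((rangeGcd r' i (j - 1) : ℚ) * (rangeGcd r' (i + 1) j : ℚ)) := by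
      apply Finset.prod_congr rfl
      intro i hi
      apply Finset.prod_congr rfl
      intro j hj
      rw [Finset.mem_Icc] at hi hj
      rw [rangeGcd_congr (i := i+1) (j := j-1) (by omega) (by omega) hagree,
        rangeGcd_congr (i := i) (j := j) (by omega) (by omega) hagree,
        rangeGcd_congr (i := i) (j := j-1) (by omega) (by omega) hagree,
        rangeGcd_congr (i := i+1) (j := j) (by omega) (by omega) hagree]
    rw [L, key]
    rw [rangeGcd_congr (i := 1) (j := n) (by omega) (le_refl n) hagree]
    congr 1
    · congr 1
      apply Finset.prod_congr rfl
      intro j hj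
      rw [Finset.mem_Icc] at hj
      rw [hagree j (by omega) (by omega)]
    · apply Finset.prod_congr rfl
      intro i hi
      rw [Finset.mem_Icc] at hi
      rw [hagree i (by omega) (by omega), hagree (i+1) (by omega) (by omega)]
end
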